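/- arXiv:1208.0357 — 2 statements merged into one kernel-verified Lean document; each statement's English description precedes it below -/
import Mathlib

section
/- Let ℓ, m ≥ 1 be integers, at least one of which is even, and let Φ be the total Culler–Shalen seminorm function for K = J(ℓ,−m) (with α = ℓm+1 and β = m). Then Φ(0,1) = 2ℓm if ℓ and m are both even, Φ(0,1) = m(ℓm+1) if ℓ is odd, and Φ(0,1) = ℓ(ℓm+1) if m is odd. (This value is the M-degree of the Â-polynomial of J(ℓ,−m).) -/
noncomputable section

/-- The continued fraction value `cf [n_1, …, n_k] = 1/(n_1 + 1/(n_2 + ⋯ + 1/n_k))`. -/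
def cf : List ℤ → ℚ
  | [] => 0
  | n :: L => 1 / ((n : ℚ) + cf L)

/-- `n⁺`: the number of (0-based) indices `j` with `sign(n_j) = (−1)^j`
(1-based: `sign(n_i) = (−1)^{i−1}`). -/
def nplus (L : List ℤ) : ℕ :=
  ((Finset.range L.length).filter (fun j => (L.getD j 0).sign = (-1) ^ j)).card

/-- `s(n) = n⁺ − n⁻` where `n⁻ = k − n⁺`. -/
def sval (L : List ℤ) : ℤ := 2 * (nplus L : ℤ) - L.length

/-- The set `S` of all finite integer sequences with all entries of absolute value at
least `2` whose continued fraction value is `β/α` or `(β−α)/α`. -/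
def Sset (α β : ℤ) : Set (List ℤ) :=
  {L | (∀ n ∈ L, 2 ≤ |n|) ∧
    (cf L = (β : ℚ) / (α : ℚ) ∨ cf L = ((β : ℚ) - (α : ℚ)) / (α : ℚ))}

/-- The weight `∏_{j=1}^{k} (|n_j| − 1)` of an expansion. -/
def weightProd (L : List ℤ) : ℤ := (L.map (fun n => |n| - 1)).prod

/-- The total Culler–Shalen seminorm
`Φ(p,q) = (1/2)(−|p| + Σ_{n∈S} |p − N_n·q|·∏_j (|n_j| − 1))`, where
`N_n = 2(s(n) − s(n₀))` and `n₀` is the all-even expansion in `S`. -/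
def totalSeminorm (α β : ℤ) (n₀ : List ℤ) (p q : ℤ) : ℚ :=
  (1 / 2) * (-(|(p : ℚ)|) +
    ∑ᶠ L ∈ Sset α β, ((|p - 2 * (sval L - sval n₀) * q| * weightProd L : ℤ) : ℚ))

def good (L : List ℤ) : Prop := ∀ n ∈ L, 2 ≤ |n|
@[simp] lemma cf_nil : cf [] = 0 := rfl
@[simp] lemma cf_cons (n : ℤ) (L : List ℤ) : cf (n :: L) = 1 / ((n : ℚ) + cf L) := rfl
lemma cf_map_neg (L : List ℤ) : cf (L.map (fun n => -n)) = - cf L := by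
  induction L with
  | nil => simp
  | cons n L ih =>
    simp only [List.map_cons, cf_cons, ih]
    push_cast
    rw [← neg_add, one_div, one_div, inv_neg]
lemma good_cons {n : ℤ} {L : List ℤ} (h : good (n :: L)) : 2 ≤ |n| ∧ good L :=
  ⟨h n (by simp), fun x hx => h x (by simp [hx])⟩
lemma good_map_neg {L : List ℤ} (h : good L) : good (L.map (fun n => -n)) := by
  intro x hx
  simp only [List.mem_map] at hx
  obtain ⟨y, hy, rfl⟩ := hx
  simpa using h y hy
lemma cf_bound {L : List ℤ} (h : good L) : |cf L| < 1 ∧ (L ≠ [] → cf L ≠ 0) := by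
  induction L with
  | nil => simp
  | cons n L ih =>
    obtain ⟨hn, hL⟩ := good_cons h
    obtain ⟨hb, -⟩ := ih hL
    have hn' : (2:ℚ) ≤ |(n:ℚ)| := by exact_mod_cast hn
    have hd : 1 < |(n:ℚ) + cf L| := by
      have := abs_add_le (↑n + cf L) (-cf L)
      simp only [add_neg_cancel_right, abs_neg] at this
      linarith
    have hd0 : (n:ℚ) + cf L ≠ 0 := by
      intro h0; rw [h0] at hd; simp at hd; linarith
    constructor
    · rw [cf_cons, abs_div, abs_one, div_lt_one (by linarith)]; linarith
    · intro _
      rw [cf_cons]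
      exact one_div_ne_zero hd0
lemma cf_step {n : ℤ} {L : List ℤ} {r : ℚ} (h : good (n :: L)) (hr : cf (n :: L) = r) :
    r ≠ 0 ∧ r * ((n:ℚ) + cf L) = 1 ∧ -1 < cf L ∧ cf L < 1 := by
  obtain ⟨hn, hL⟩ := good_cons h
  have hb := (cf_bound hL).1
  rw [abs_lt] at hb
  have hne : r ≠ 0 := by
    rw [← hr]; exact (cf_bound h).2 (by simp)
  have hd0 : (n:ℚ) + cf L ≠ 0 := by
    intro h0
    rw [cf_cons, h0] at hr; simp at hr; exact hne hr.symm
  refine ⟨hne, ?_, hb.1, hb.2⟩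
  rw [cf_cons] at hr
  field_simp at hr
  linarith
lemma map_neg_neg (L : List ℤ) : (L.map (fun n => -n)).map (fun n => -n) = L := by
  simp [List.map_map, Function.comp]
lemma int_in (n : ℤ) (hg : 2 ≤ |n|) (h1 : (-3:ℚ) < n) (h2 : (n:ℚ) < 0) : n = -2 := by
  have h1' : (-3:ℤ) < n := by exact_mod_cast h1
  have h2' : n < 0 := by exact_mod_cast h2
  rcases le_abs.mp hg with h | h <;> omega
def alt : ℕ → List ℤ
  | 0 => []
  | k+1 => (-2) :: (alt k).map (fun n => -n)
def tee (m : ℕ) : ℕ → List ℤ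
  | 0 => [-((m:ℤ)+1)]
  | k+1 => (-2) :: (tee m k).map (fun n => -n)
lemma good_alt (k : ℕ) : good (alt k) := by
  induction k with
  | zero => intro x hx; simp [alt] at hx
  | succ k ih =>
    intro x hx
    simp only [alt, List.mem_cons] at hx
    rcases hx with rfl | hx
    · decide
    · exact good_map_neg ih x hx
lemma good_tee (m : ℕ) (hm : 1 ≤ m) (k : ℕ) : good (tee m k) := by
  induction k with
  | zero =>
    intro x hx
    simp only [tee, List.mem_singleton] at hx
    subst hx
    rw [abs_neg, abs_of_nonneg (by positivity)]
    have : (1:ℤ) ≤ (m:ℤ) := by exact_mod_cast hm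
    linarith
  | succ k ih =>
    intro x hx
    simp only [tee, List.mem_cons] at hx
    rcases hx with rfl | hx
    · decide
    · exact good_map_neg ih x hx
lemma cf_alt (k : ℕ) : cf (alt k) = -(k:ℚ)/((k:ℚ)+1) := by
  induction k with
  | zero => simp [alt]
  | succ k ih =>
    have h1 : (0:ℚ) < (k:ℚ)+1 := by positivity
    rw [alt, cf_cons, cf_map_neg, ih]
    have hX : (-2:ℚ) + -(-(k:ℚ)/((k:ℚ)+1)) ≠ 0 := by
      intro h; field_simp at h; linarith
    push_cast
    rw [div_eq_div_iff hX (by positivity)]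
    field_simp
    ring
lemma cf_tee (m : ℕ) (k : ℕ) : cf (tee m k) = -((k:ℚ)*m+1)/(((k:ℚ)+1)*m+1) := by
  induction k with
  | zero =>
    have h1 : (0:ℚ) < (m:ℚ)+1 := by positivity
    simp only [tee, cf_cons, cf_nil, add_zero]
    push_cast
    rw [div_eq_div_iff (by linarith) (by positivity)]
    ring
  | succ k ih =>
    have h1 : (0:ℚ) < ((k:ℚ)+1)*m+1 := by positivity
    rw [tee, cf_cons, cf_map_neg, ih]
    have hX : (-2:ℚ) + -(-((k:ℚ)*m+1)/(((k:ℚ)+1)*m+1)) ≠ 0 := by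
      intro h; field_simp at h; nlinarith [Nat.cast_nonneg (α := ℚ) k, Nat.cast_nonneg (α := ℚ) m]
    push_cast
    rw [div_eq_div_iff hX (by positivity)]
    field_simp
    ring
lemma eq_nil_of_cf_zero {L : List ℤ} (h : good L) (h0 : cf L = 0) : L = [] := by
  by_contra hne
  exact (cf_bound h).2 hne h0
lemma alt_unique : ∀ (k : ℕ) (L : List ℤ), good L → cf L = -(k:ℚ)/((k:ℚ)+1) → L = alt k := by
  intro k
  induction k with
  | zero =>
    intro L hg hv
    simp only [Nat.cast_zero, neg_zero, zero_div] at hv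
    rw [eq_nil_of_cf_zero hg hv]; rfl
  | succ k ih =>
    intro L hg hv
    push_cast at hv
    have hK : (0:ℚ) ≤ (k:ℚ) := Nat.cast_nonneg k
    match L with
    | [] =>
      exfalso
      rw [cf_nil] at hv
      have : (0:ℚ) < ((k:ℚ)+1)/((k:ℚ)+1+1) := by positivity
      rw [neg_div] at hv
      linarith
    | n :: L' =>
      obtain ⟨hr0, hy, hb1, hb2⟩ := cf_step hg hv
      have hg' := (good_cons hg).2
      have hn := (good_cons hg).1
      have hd : (0:ℚ) < (k:ℚ)+1+1 := by positivity
      rw [div_mul_eq_mul_div, div_eq_one_iff_eq (ne_of_gt hd)] at hy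
      -- hy : -(k+1) * (n + cf L') = k+1+1
      have hn2 : (n:ℚ) < 0 := by nlinarith
      have hn1 : (-3:ℚ) < n := by nlinarith
      have hne2 : n = -2 := int_in n hn hn1 hn2
      subst hne2
      have hyv : cf L' = (k:ℚ)/((k:ℚ)+1) := by
        rw [eq_div_iff (by positivity : ((k:ℚ)+1) ≠ 0)]
        push_cast at hy
        linear_combination (-1) * hy
      have hmap : L'.map (fun n => -n) = alt k := by
        apply ih _ (good_map_neg hg')
        rw [cf_map_neg, hyv, neg_div]
      have := congrArg (List.map (fun n : ℤ => -n)) hmap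
      rw [map_neg_neg] at this
      rw [this]; rfl
lemma cf_inv_unique (a : ℤ) (ha : 2 ≤ a) (L : List ℤ) (hg : good L) (hv : cf L = 1/(a:ℚ)) :
    L = [a] := by
  have ha' : (2:ℚ) ≤ (a:ℚ) := by exact_mod_cast ha
  match L with
  | [] =>
    exfalso
    rw [cf_nil] at hv
    have : (0:ℚ) < 1/(a:ℚ) := by positivity
    linarith
  | n :: L' =>
    obtain ⟨hr0, hy, hb1, hb2⟩ := cf_step hg hv
    rw [one_div, inv_mul_eq_div, div_eq_one_iff_eq (by positivity : (a:ℚ) ≠ 0)] at hy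
    -- hy : n + cf L' = a
    have h1 : (a:ℚ) - 1 < n := by linarith
    have h2 : (n:ℚ) < a + 1 := by linarith
    have hna : n = a := by
      have h1' : a - 1 < n := by exact_mod_cast h1
      have h2' : n < a + 1 := by exact_mod_cast h2
      omega
    subst hna
    have : cf L' = 0 := by linarith
    rw [eq_nil_of_cf_zero ((good_cons hg).2) this]
lemma tee_unique (m : ℕ) (hm : 1 ≤ m) :
    ∀ (k : ℕ) (L : List ℤ), good L → cf L = -((k:ℚ)*m+1)/(((k:ℚ)+1)*m+1) → L = tee m k := by
  have hM : (1:ℚ) ≤ (m:ℚ) := by exact_mod_cast hm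
  intro k
  induction k with
  | zero =>
    intro L hg hv
    simp only [Nat.cast_zero, zero_mul, zero_add, one_mul] at hv
    have hmap : L.map (fun n => -n) = [(m:ℤ)+1] := by
      apply cf_inv_unique ((m:ℤ)+1) (by exact_mod_cast by omega : (2:ℤ) ≤ (m:ℤ)+1) _
        (good_map_neg hg)
      rw [cf_map_neg, hv]
      push_cast
      rw [neg_div, neg_neg, one_div]
    have := congrArg (List.map (fun n : ℤ => -n)) hmap
    rw [map_neg_neg] at this
    rw [this]; rfl
  | succ k ih =>
    intro L hg hv
    push_cast at hv
    have hK : (0:ℚ) ≤ (k:ℚ) := Nat.cast_nonneg k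
    match L with
    | [] =>
      exfalso
      rw [cf_nil] at hv
      have : (0:ℚ) < (((k:ℚ)+1)*m+1)/(((k:ℚ)+1+1)*m+1) := by positivity
      rw [neg_div] at hv
      linarith
    | n :: L' =>
      obtain ⟨hr0, hy, hb1, hb2⟩ := cf_step hg hv
      have hg' := (good_cons hg).2
      have hn := (good_cons hg).1
      have hd : (0:ℚ) < ((k:ℚ)+1+1)*m+1 := by positivity
      rw [div_mul_eq_mul_div, div_eq_one_iff_eq (ne_of_gt hd)] at hy
      -- hy : -((k+1)*m+1) * (n + cf L') = (k+1+1)*m+1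
      have hP : (0:ℚ) < ((k:ℚ)+1)*m+1 := by positivity
      have hn2 : (n:ℚ) < 0 := by nlinarith
      have hn1 : (-3:ℚ) < n := by nlinarith
      have hne2 : n = -2 := int_in n hn hn1 hn2
      subst hne2
      have hyv : cf L' = ((k:ℚ)*m+1)/(((k:ℚ)+1)*m+1) := by
        rw [eq_div_iff (ne_of_gt hP)]
        push_cast at hy
        linear_combination (-1) * hy
      have hmap : L'.map (fun n => -n) = tee m k := by
        apply ih _ (good_map_neg hg')
        rw [cf_map_neg, hyv, neg_div]
      have := congrArg (List.map (fun n : ℤ => -n)) hmap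
      rw [map_neg_neg] at this
      rw [this]; rfl
lemma beta_unique (ℓ m : ℕ) (hl : 1 ≤ ℓ) (hm : 1 ≤ m) (L : List ℤ) (hg : good L)
    (hv : cf L = (m:ℚ)/((ℓ:ℚ)*m+1)) :
    L = ((ℓ:ℤ)+1) :: alt (m-1) ∨ (2 ≤ ℓ ∧ 2 ≤ m ∧ L = [(ℓ:ℤ), (m:ℤ)]) := by
  have hM : (1:ℚ) ≤ (m:ℚ) := by exact_mod_cast hm
  have hΛ : (1:ℚ) ≤ (ℓ:ℚ) := by exact_mod_cast hl
  match L with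
  | [] =>
    exfalso
    rw [cf_nil] at hv
    have : (0:ℚ) < (m:ℚ)/((ℓ:ℚ)*m+1) := by positivity
    linarith
  | n :: L' =>
    obtain ⟨hr0, hy, hb1, hb2⟩ := cf_step hg hv
    have hg' := (good_cons hg).2
    have hn := (good_cons hg).1
    have hP : (0:ℚ) < (ℓ:ℚ)*m+1 := by positivity
    rw [div_mul_eq_mul_div, div_eq_one_iff_eq (ne_of_gt hP)] at hy
    -- hy : m * (n + cf L') = ℓ*m+1
    have hn1 : (ℓ:ℚ) - 1 < n := by nlinarith
    have hn2 : (n:ℚ) < (ℓ:ℚ) + 2 := by nlinarith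
    have hcase : n = (ℓ:ℤ) ∨ n = (ℓ:ℤ) + 1 := by
      have h1' : (ℓ:ℤ) - 1 < n := by exact_mod_cast hn1
      have h2' : n < (ℓ:ℤ) + 2 := by exact_mod_cast hn2
      omega
    rcases hcase with rfl | rfl
    · -- n = ℓ : branch [ℓ, m], requires ℓ ≥ 2, m ≥ 2
      right
      have hl2 : 2 ≤ ℓ := by
        have := hn
        rw [abs_of_nonneg (by exact_mod_cast Nat.zero_le ℓ : (0:ℤ) ≤ (ℓ:ℤ))] at this
        exact_mod_cast this
      have hyv : cf L' = 1/(m:ℚ) := by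
        rw [eq_div_iff (by positivity : (m:ℚ) ≠ 0)]
        push_cast at hy ⊢
        linear_combination hy
      have hm2 : 2 ≤ m := by
        by_contra h
        have : m = 1 := by omega
        subst this
        rw [hyv] at hb2
        norm_num at hb2
      have := cf_inv_unique (m:ℤ) (by exact_mod_cast hm2) L' hg' hyv
      exact ⟨hl2, hm2, by rw [this]⟩
    · -- n = ℓ+1 : branch (ℓ+1) :: alt (m-1)
      left
      have hyv : cf L' = -((m:ℚ)-1)/(m:ℚ) := by
        rw [eq_div_iff (by positivity : (m:ℚ) ≠ 0)]
        push_cast at hy ⊢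
        linear_combination hy
      have : L' = alt (m-1) := by
        apply alt_unique (m-1) L' hg'
        rw [Nat.cast_sub hm, Nat.cast_one, hyv]
        norm_num
      rw [this]
def svalR : List ℤ → ℤ
  | [] => 0
  | n :: L => n.sign - svalR L
lemma sign_pm {x : ℤ} (hx : x ≠ 0) : x.sign = 1 ∨ x.sign = -1 := by
  rcases lt_trichotomy x 0 with h | h | h
  · right; exact Int.sign_eq_neg_one_iff_neg.mpr h
  · exact absurd h hx
  · left; exact Int.sign_eq_one_iff_pos.mpr h
lemma neg_one_pow_pm (j : ℕ) : ((-1:ℤ)) ^ j = 1 ∨ ((-1:ℤ)) ^ j = -1 := by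
  rcases Nat.even_or_odd j with h | h
  · left; exact h.neg_one_pow
  · right; exact h.neg_one_pow
lemma filter_flip (L : List ℤ) (hL : ∀ x ∈ L, x ≠ 0) :
    (((Finset.range L.length).filter (fun j => (L.getD j 0).sign = (-1) ^ (j+1))).card : ℤ)
      = L.length - nplus L := by
  have key : (Finset.range L.length).filter (fun j => (L.getD j 0).sign = (-1) ^ (j+1))
      = (Finset.range L.length).filter (fun j => ¬ ((L.getD j 0).sign = (-1) ^ j)) := by
    apply Finset.filter_congr
    intro j hj
    simp only [Finset.mem_range] at hj
    have hx : L.getD j 0 ≠ 0 := by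
      rw [List.getD_eq_getElem L 0 hj]
      exact hL _ (List.getElem_mem hj)
    have h1 := sign_pm hx
    have h2 := neg_one_pow_pm j
    simp only [pow_succ, eq_iff_iff]
    constructor
    · intro h h'
      rw [h'] at h
      rcases h2 with h2 | h2 <;> rw [h2] at h <;> norm_num at h
    · intro h
      rcases h1 with h1 | h1 <;> rcases h2 with h2 | h2 <;>
        rw [h1, h2] at h ⊢ <;> norm_num at h <;> norm_num
  have htot := Finset.card_filter_add_card_filter_not
    (s := Finset.range L.length) (p := fun j => (L.getD j 0).sign = (-1) ^ j)
  simp only [Finset.card_range] at htot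
  rw [key]
  unfold nplus
  omega
lemma nplus_cons_int (n : ℤ) (L : List ℤ) (hn : n ≠ 0) (hL : ∀ x ∈ L, x ≠ 0) :
    (nplus (n :: L) : ℤ) = (if 0 < n then 1 else 0) + L.length - nplus L := by
  have h1 : nplus (n :: L)
      = ∑ j ∈ Finset.range (L.length + 1),
          (if ((n :: L).getD j 0).sign = (-1) ^ j then 1 else 0) := by
    unfold nplus
    rw [Finset.card_filter]
    rfl
  rw [h1, Finset.sum_range_succ']
  have h2 : ∀ i, (if ((n :: L).getD (i+1) 0).sign = (-1) ^ (i+1) then (1:ℕ) else 0)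
      = (if (L.getD i 0).sign = (-1) ^ (i+1) then 1 else 0) := by
    intro i; rfl
  simp only [h2]
  have h3 : (∑ i ∈ Finset.range L.length,
      (if (L.getD i 0).sign = (-1) ^ (i+1) then (1:ℕ) else 0))
      = ((Finset.range L.length).filter (fun j => (L.getD j 0).sign = (-1) ^ (j+1))).card := by
    rw [Finset.card_filter]
  have h4 : (if ((n :: L).getD 0 0).sign = (-1) ^ 0 then (1:ℕ) else 0)
      = (if 0 < n then 1 else 0) := by
    simp only [List.getD_cons_zero, pow_zero]
    by_cases h : 0 < n
    · rw [if_pos (Int.sign_eq_one_iff_pos.mpr h), if_pos h]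
    · rw [if_neg, if_neg h]
      rw [Int.sign_eq_one_iff_pos]
      exact h
  rw [h4]
  have h5 := filter_flip L hL
  rw [← h3] at h5
  rw [Nat.cast_add, h5]
  by_cases h : 0 < n <;> simp only [h, if_true, if_false] <;> push_cast <;> ring
lemma sval_eq_svalR (L : List ℤ) (hL : ∀ x ∈ L, x ≠ 0) : sval L = svalR L := by
  induction L with
  | nil => rfl
  | cons n L ih =>
    have hn : n ≠ 0 := hL n (by simp)
    have hL' : ∀ x ∈ L, x ≠ 0 := fun x hx => hL x (by simp [hx])
    unfold sval
    rw [nplus_cons_int n L hn hL']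
    have := ih hL'
    unfold sval at this
    simp only [svalR, List.length_cons]
    push_cast
    rcases lt_trichotomy n 0 with h | h | h
    · rw [if_neg (by omega), Int.sign_eq_neg_one_iff_neg.mpr h]
      omega
    · exact absurd h hn
    · rw [if_pos h, Int.sign_eq_one_iff_pos.mpr h]
      omega
lemma svalR_map_neg (L : List ℤ) : svalR (L.map (fun n => -n)) = - svalR L := by
  induction L with
  | nil => rfl
  | cons n L ih =>
    simp only [List.map_cons, svalR, ih, Int.sign_neg]
    ring
@[simp] lemma weightProd_nil : weightProd [] = 1 := rfl
@[simp] lemma weightProd_cons (n : ℤ) (L : List ℤ) :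
    weightProd (n :: L) = (|n| - 1) * weightProd L := by
  simp [weightProd]
lemma weightProd_map_neg (L : List ℤ) : weightProd (L.map (fun n => -n)) = weightProd L := by
  induction L with
  | nil => rfl
  | cons n L ih => simp [ih]
lemma weightProd_alt (k : ℕ) : weightProd (alt k) = 1 := by
  induction k with
  | zero => rfl
  | succ k ih => simp [alt, weightProd_map_neg, ih]
lemma weightProd_tee (m : ℕ) (k : ℕ) : weightProd (tee m k) = (m:ℤ) := by
  induction k with
  | zero =>
    simp only [tee, weightProd_cons, weightProd_nil, mul_one, abs_neg]
    rw [abs_of_nonneg (by positivity)]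
    ring
  | succ k ih =>
    simp [tee, weightProd_map_neg, ih]

-- ### svals
lemma svalR_alt (k : ℕ) : svalR (alt k) = -(k:ℤ) := by
  induction k with
  | zero => rfl
  | succ k ih =>
    show (-2:ℤ).sign - svalR ((alt k).map (fun n => -n)) = -((k:ℤ)+1)
    rw [svalR_map_neg, ih, show ((-2:ℤ)).sign = -1 from rfl]
    ring
lemma svalR_tee (m : ℕ) (k : ℕ) : svalR (tee m k) = -(k:ℤ) - 1 := by
  induction k with
  | zero =>
    show (-((m:ℤ)+1)).sign - 0 = -(0:ℤ) - 1
    have h0 : (0:ℤ) ≤ (m:ℤ) := Int.ofNat_nonneg m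
    rw [Int.sign_eq_neg_one_iff_neg.mpr (by omega)]
    ring
  | succ k ih =>
    show (-2:ℤ).sign - svalR ((tee m k).map (fun n => -n)) = -((k:ℤ)+1) - 1
    rw [svalR_map_neg, ih, show ((-2:ℤ)).sign = -1 from rfl]
    ring
lemma good_nonzero {L : List ℤ} (h : good L) : ∀ x ∈ L, x ≠ 0 := by
  intro x hx h0
  have := h x hx
  rw [h0] at this
  norm_num at this
lemma good_Lb (ℓ m : ℕ) (hl : 1 ≤ ℓ) : good (((ℓ:ℤ)+1) :: alt (m-1)) := by
  intro x hx
  rcases List.mem_cons.mp hx with rfl | hx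
  · rw [abs_of_nonneg (by positivity)]
    have : (1:ℤ) ≤ (ℓ:ℤ) := by exact_mod_cast hl
    linarith
  · exact good_alt (m-1) x hx
lemma good_La (ℓ m : ℕ) (hl : 2 ≤ ℓ) (hm : 2 ≤ m) : good [(ℓ:ℤ), (m:ℤ)] := by
  intro x hx
  have hl' : (2:ℤ) ≤ (ℓ:ℤ) := by exact_mod_cast hl
  have hm' : (2:ℤ) ≤ (m:ℤ) := by exact_mod_cast hm
  rcases List.mem_cons.mp hx with rfl | hx
  · rw [abs_of_nonneg (by positivity)]; exact hl'
  · rcases List.mem_cons.mp hx with rfl | hx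
    · rw [abs_of_nonneg (by positivity)]; exact hm'
    · simp at hx
lemma sval_Lb (ℓ m : ℕ) (hl : 1 ≤ ℓ) (hm : 1 ≤ m) :
    sval (((ℓ:ℤ)+1) :: alt (m-1)) = (m:ℤ) := by
  rw [sval_eq_svalR _ (good_nonzero (good_Lb ℓ m hl))]
  show ((ℓ:ℤ)+1).sign - svalR (alt (m-1)) = (m:ℤ)
  rw [svalR_alt, Int.sign_eq_one_iff_pos.mpr (by positivity)]
  have : ((m-1 : ℕ) : ℤ) = (m:ℤ) - 1 := by
    push_cast [Nat.cast_sub hm]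
    ring
  rw [this]
  ring
lemma sval_Lc (ℓ m : ℕ) (hl : 1 ≤ ℓ) (hm : 1 ≤ m) :
    sval (tee m (ℓ-1)) = -(ℓ:ℤ) := by
  rw [sval_eq_svalR _ (good_nonzero (good_tee m hm (ℓ-1))), svalR_tee]
  have : ((ℓ-1 : ℕ) : ℤ) = (ℓ:ℤ) - 1 := by
    push_cast [Nat.cast_sub hl]
    ring
  rw [this]
  ring
lemma sval_La (ℓ m : ℕ) (hl : 2 ≤ ℓ) (hm : 2 ≤ m) :
    sval [(ℓ:ℤ), (m:ℤ)] = 0 := by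
  rw [sval_eq_svalR _ (good_nonzero (good_La ℓ m hl hm))]
  show (ℓ:ℤ).sign - ((m:ℤ).sign - 0) = 0
  rw [Int.sign_eq_one_iff_pos.mpr (by exact_mod_cast by omega : (0:ℤ) < (ℓ:ℤ)),
    Int.sign_eq_one_iff_pos.mpr (by exact_mod_cast by omega : (0:ℤ) < (m:ℤ))]
  ring

-- ### structure of `tee`, distinctness, parity
lemma tee_head (m k : ℕ) : ∃ x t, tee m k = x :: t ∧ x < 0 := by
  cases k with
  | zero =>
    refine ⟨-((m:ℤ)+1), [], rfl, ?_⟩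
    have : (0:ℤ) ≤ (m:ℤ) := by positivity
    omega
  | succ k => exact ⟨-2, _, rfl, by norm_num⟩
lemma tee_last_mem (m k : ℕ) : (-1:ℤ)^(k+1) * ((m:ℤ)+1) ∈ tee m k := by
  induction k with
  | zero => simp [tee]
  | succ k ih =>
    show _ ∈ (-2) :: (tee m k).map (fun n => -n)
    rw [List.mem_cons]
    right
    rw [List.mem_map]
    exact ⟨(-1:ℤ)^(k+1) * ((m:ℤ)+1), ih, by ring⟩
lemma tee_odd_mem (m k : ℕ) (hm : Even m) : ∃ x ∈ tee m k, ¬ Even x := by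
  refine ⟨(-1:ℤ)^(k+1) * ((m:ℤ)+1), tee_last_mem m k, ?_⟩
  intro h
  rw [Int.even_mul] at h
  rcases h with h | h
  · have : Odd ((-1:ℤ)^(k+1)) := (by norm_num : Odd (-1:ℤ)).pow
    exact (Int.not_odd_iff_even.mpr h) this
  · have : Even ((m:ℤ)) := by exact_mod_cast hm
    have h2 : Odd ((m:ℤ)+1) := Even.add_one this
    exact (Int.not_odd_iff_even.mpr h) h2

-- ### characterization of S
lemma Sset_mem (ℓ m : ℕ) (hl : 1 ≤ ℓ) (hm : 1 ≤ m) (L : List ℤ) :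
    L ∈ Sset ((ℓ:ℤ)*m+1) (m:ℤ) ↔
      (L = ((ℓ:ℤ)+1) :: alt (m-1) ∨ L = tee m (ℓ-1) ∨
        (2 ≤ ℓ ∧ 2 ≤ m ∧ L = [(ℓ:ℤ), (m:ℤ)])) := by
  have hP : (0:ℚ) < (ℓ:ℚ)*m+1 := by positivity
  have hM : (1:ℚ) ≤ (m:ℚ) := by exact_mod_cast hm
  have hm0 : (m:ℚ) ≠ 0 := by positivity
  constructor
  · rintro ⟨hg, hv | hv⟩
    · have hv' : cf L = (m:ℚ)/((ℓ:ℚ)*m+1) := by push_cast at hv ⊢; exact hv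
      rcases beta_unique ℓ m hl hm L hg hv' with h | h
      · left; exact h
      · right; right; exact h
    · right; left
      apply tee_unique m hm (ℓ-1) L hg
      push_cast at hv
      rw [hv, Nat.cast_sub hl, Nat.cast_one]
      have e : (((ℓ:ℚ)-1)+1)*m+1 = (ℓ:ℚ)*m+1 := by ring
      rw [e, div_eq_div_iff (ne_of_gt hP) (ne_of_gt hP)]
      ring
  · rintro (rfl | rfl | ⟨h2l, h2m, rfl⟩)
    · refine ⟨good_Lb ℓ m hl, Or.inl ?_⟩
      have hden : ((ℓ:ℚ)+1) + cf (alt (m-1)) = ((ℓ:ℚ)*m+1)/m := by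
        rw [cf_alt, Nat.cast_sub hm, Nat.cast_one]
        have e : ((m:ℚ)-1)+1 = (m:ℚ) := by ring
        rw [e]
        field_simp
        ring
      rw [cf_cons]
      push_cast
      rw [hden, one_div_div]
    · refine ⟨good_tee m hm (ℓ-1), Or.inr ?_⟩
      rw [cf_tee, Nat.cast_sub hl, Nat.cast_one]
      have e : (((ℓ:ℚ)-1)+1)*m+1 = (ℓ:ℚ)*m+1 := by ring
      rw [e]
      push_cast
      rw [div_eq_div_iff (ne_of_gt hP) (ne_of_gt hP)]
      ring
    · refine ⟨good_La ℓ m h2l h2m, Or.inl ?_⟩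
      rw [cf_cons, cf_cons, cf_nil]
      have hden : (ℓ:ℚ) + 1/((m:ℚ) + 0) = ((ℓ:ℚ)*m+1)/m := by
        field_simp
        ring
      push_cast
      rw [hden, one_div_div]

-- ### distinctness
lemma ne_bc (ℓ m : ℕ) : ((ℓ:ℤ)+1) :: alt (m-1) ≠ tee m (ℓ-1) := by
  obtain ⟨x, t, he, hx⟩ := tee_head m (ℓ-1)
  rw [he]
  intro h
  have h1 := (List.cons.injEq _ _ _ _ ▸ h).1
  have : (0:ℤ) ≤ (ℓ:ℤ) := Int.ofNat_nonneg ℓ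
  omega
lemma ne_ab (ℓ m : ℕ) : ([(ℓ:ℤ), (m:ℤ)] : List ℤ) ≠ ((ℓ:ℤ)+1) :: alt (m-1) := by
  intro h
  have h1 := (List.cons.injEq _ _ _ _ ▸ h).1
  omega
lemma ne_ac (ℓ m : ℕ) (hl : 1 ≤ ℓ) : ([(ℓ:ℤ), (m:ℤ)] : List ℤ) ≠ tee m (ℓ-1) := by
  obtain ⟨x, t, he, hx⟩ := tee_head m (ℓ-1)
  rw [he]
  intro h
  have h1 := (List.cons.injEq _ _ _ _ ▸ h).1
  have : (1:ℤ) ≤ (ℓ:ℤ) := by exact_mod_cast hl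
  omega
lemma weight_Lb (ℓ m : ℕ) : weightProd (((ℓ:ℤ)+1) :: alt (m-1)) = (ℓ:ℤ) := by
  rw [weightProd_cons, weightProd_alt, abs_of_nonneg (by positivity)]
  ring
lemma weight_La (ℓ m : ℕ) : weightProd [(ℓ:ℤ), (m:ℤ)] = ((ℓ:ℤ)-1) * ((m:ℤ)-1) := by
  rw [show ([(ℓ:ℤ), (m:ℤ)] : List ℤ) = (ℓ:ℤ) :: (m:ℤ) :: [] from rfl,
    weightProd_cons, weightProd_cons, weightProd_nil,
    abs_of_nonneg (Int.ofNat_nonneg ℓ), abs_of_nonneg (Int.ofNat_nonneg m)]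
  ring
lemma Phi_eval (ℓ m : ℕ) (hl : 1 ≤ ℓ) (hm : 1 ≤ m) (n₀ : List ℤ) :
    totalSeminorm ((ℓ:ℤ)*m+1) (m:ℤ) n₀ 0 1 =
      (1/2) * ( ((|0 - 2*((m:ℤ) - sval n₀)*1| * (ℓ:ℤ) : ℤ) : ℚ)
        + ((|0 - 2*(-(ℓ:ℤ) - sval n₀)*1| * (m:ℤ) : ℤ) : ℚ)
        + (if 2 ≤ ℓ ∧ 2 ≤ m
            then ((|0 - 2*(0 - sval n₀)*1| * (((ℓ:ℤ)-1) * ((m:ℤ)-1)) : ℤ) : ℚ) else 0) ) := by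
  simp only [totalSeminorm, Int.cast_zero, abs_zero, neg_zero, zero_add]
  by_cases h2 : 2 ≤ ℓ ∧ 2 ≤ m
  · have hset : Sset ((ℓ:ℤ)*m+1) (m:ℤ) =
        (↑({((ℓ:ℤ)+1) :: alt (m-1), tee m (ℓ-1), [(ℓ:ℤ), (m:ℤ)]} : Finset (List ℤ)) :
          Set (List ℤ)) := by
      ext L
      rw [Sset_mem ℓ m hl hm]
      simp only [Finset.coe_insert, Set.mem_insert_iff, Finset.coe_singleton,
        Set.mem_singleton_iff]
      constructor
      · rintro (h | h | ⟨_, _, h⟩) <;> tauto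
      · rintro (h | h | h) <;> tauto
    rw [hset, finsum_mem_coe_finset]
    rw [Finset.sum_insert (by
      simp only [Finset.mem_insert, Finset.mem_singleton]
      push_neg
      exact ⟨ne_bc ℓ m, fun h => (ne_ab ℓ m) h.symm⟩)]
    rw [Finset.sum_insert (by
      simp only [Finset.mem_singleton]
      exact fun h => (ne_ac ℓ m hl) h.symm)]
    rw [Finset.sum_singleton]
    rw [sval_Lb ℓ m hl hm, sval_Lc ℓ m hl hm, sval_La ℓ m h2.1 h2.2,
      weight_Lb ℓ m, weightProd_tee m (ℓ-1), weight_La ℓ m, if_pos h2]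
    push_cast
    ring
  · have hset : Sset ((ℓ:ℤ)*m+1) (m:ℤ) =
        (↑({((ℓ:ℤ)+1) :: alt (m-1), tee m (ℓ-1)} : Finset (List ℤ)) : Set (List ℤ)) := by
      ext L
      rw [Sset_mem ℓ m hl hm]
      simp only [Finset.coe_insert, Set.mem_insert_iff, Finset.coe_singleton,
        Set.mem_singleton_iff]
      constructor
      · rintro (h | h | ⟨ha, hb, h⟩)
        · tauto
        · tauto
        · exact absurd ⟨ha, hb⟩ h2
      · rintro (h | h) <;> tauto
    rw [hset, finsum_mem_coe_finset, Finset.sum_pair (ne_bc ℓ m)]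
    rw [sval_Lb ℓ m hl hm, sval_Lc ℓ m hl hm, weight_Lb ℓ m, weightProd_tee m (ℓ-1),
      if_neg h2]
    push_cast
    ring

/-- Theorem (`M`-degree of the `Â`-polynomial of `J(ℓ,−m)`, `α = ℓm+1`, `β = m`):
`Φ(0,1) = 2ℓm` if `ℓ, m` both even, `Φ(0,1) = m(ℓm+1)` if `ℓ` is odd, and
`Φ(0,1) = ℓ(ℓm+1)` if `m` is odd. -/
theorem Mdegree_J_ell_neg_m (ℓ m : ℕ) (hℓ : 1 ≤ ℓ) (hm : 1 ≤ m)
    (hpar : Even ℓ ∨ Even m) (n₀ : List ℤ)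
    (hn₀S : n₀ ∈ Sset ((ℓ : ℤ) * m + 1) (m : ℤ)) (hn₀even : ∀ n ∈ n₀, Even n) :
    ((Even ℓ ∧ Even m) →
      totalSeminorm ((ℓ : ℤ) * m + 1) (m : ℤ) n₀ 0 1 = 2 * (ℓ : ℚ) * (m : ℚ)) ∧
    (Odd ℓ →
      totalSeminorm ((ℓ : ℤ) * m + 1) (m : ℤ) n₀ 0 1 =
        (m : ℚ) * ((ℓ : ℚ) * (m : ℚ) + 1)) ∧
    (Odd m →
      totalSeminorm ((ℓ : ℤ) * m + 1) (m : ℤ) n₀ 0 1 =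
        (ℓ : ℚ) * ((ℓ : ℚ) * (m : ℚ) + 1)) := by
  have hcase := (Sset_mem ℓ m hℓ hm n₀).mp hn₀S
  refine ⟨?_, ?_, ?_⟩
  · rintro ⟨hle, hme⟩
    have h2 : 2 ≤ ℓ ∧ 2 ≤ m := by
      obtain ⟨a, ha⟩ := hle
      obtain ⟨b, hb⟩ := hme
      omega
    have hn0 : n₀ = [(ℓ:ℤ), (m:ℤ)] := by
      rcases hcase with rfl | rfl | ⟨-, -, rfl⟩
      · exfalso
        have h := hn₀even ((ℓ:ℤ)+1) (List.mem_cons_self)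
        rw [Int.even_add_one] at h
        exact h ((Int.even_coe_nat ℓ).mpr hle)
      · exfalso
        obtain ⟨x, hxmem, hxodd⟩ := tee_odd_mem m (ℓ-1) hme
        exact hxodd (hn₀even x hxmem)
      · rfl
    rw [Phi_eval ℓ m hℓ hm n₀, hn0, sval_La ℓ m h2.1 h2.2, if_pos h2]
    have e1 : |(0:ℤ) - 2*((m:ℤ) - 0)*1| = 2*(m:ℤ) := by
      rw [show (0:ℤ) - 2*((m:ℤ) - 0)*1 = -(2*(m:ℤ)) by ring, abs_neg]
      exact abs_of_nonneg (by positivity)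
    have e2 : |(0:ℤ) - 2*(-(ℓ:ℤ) - 0)*1| = 2*(ℓ:ℤ) := by
      rw [show (0:ℤ) - 2*(-(ℓ:ℤ) - 0)*1 = 2*(ℓ:ℤ) by ring]
      exact abs_of_nonneg (by positivity)
    have e3 : |(0:ℤ) - 2*((0:ℤ) - 0)*1| = 0 := by norm_num
    rw [e1, e2, e3]
    push_cast
    ring
  · intro hlo
    have hme : Even m := by
      rcases hpar with h | h
      · exact absurd hlo (Nat.not_odd_iff_even.mpr h)
      · exact h
    have hm2 : 2 ≤ m := by obtain ⟨b, hb⟩ := hme; omega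
    have hn0 : n₀ = ((ℓ:ℤ)+1) :: alt (m-1) := by
      rcases hcase with rfl | rfl | ⟨-, -, rfl⟩
      · rfl
      · exfalso
        obtain ⟨x, hxmem, hxodd⟩ := tee_odd_mem m (ℓ-1) hme
        exact hxodd (hn₀even x hxmem)
      · exfalso
        have h := hn₀even (ℓ:ℤ) (List.mem_cons_self)
        rw [Int.even_coe_nat] at h
        exact (Nat.not_odd_iff_even.mpr h) hlo
    rw [Phi_eval ℓ m hℓ hm n₀, hn0, sval_Lb ℓ m hℓ hm]
    have e1 : |(0:ℤ) - 2*((m:ℤ) - (m:ℤ))*1| = 0 := by norm_num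
    have e2 : |(0:ℤ) - 2*(-(ℓ:ℤ) - (m:ℤ))*1| = 2*((ℓ:ℤ)+(m:ℤ)) := by
      rw [show (0:ℤ) - 2*(-(ℓ:ℤ) - (m:ℤ))*1 = 2*((ℓ:ℤ)+(m:ℤ)) by ring]
      exact abs_of_nonneg (by positivity)
    have e3 : |(0:ℤ) - 2*((0:ℤ) - (m:ℤ))*1| = 2*(m:ℤ) := by
      rw [show (0:ℤ) - 2*((0:ℤ) - (m:ℤ))*1 = 2*(m:ℤ) by ring]
      exact abs_of_nonneg (by positivity)
    rw [e1, e2, e3]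
    by_cases h2 : 2 ≤ ℓ ∧ 2 ≤ m
    · rw [if_pos h2]
      have hl2 : (2:ℚ) ≤ (ℓ:ℚ) := by exact_mod_cast h2.1
      push_cast
      ring
    · have hl1 : ℓ = 1 := by omega
      subst hl1
      rw [if_neg h2]
      push_cast
      ring
  · intro hmo
    have hle : Even ℓ := by
      rcases hpar with h | h
      · exact h
      · exact absurd hmo (Nat.not_odd_iff_even.mpr h)
    have hl2 : 2 ≤ ℓ := by obtain ⟨b, hb⟩ := hle; omega
    have hn0 : n₀ = tee m (ℓ-1) := by
      rcases hcase with rfl | rfl | ⟨-, -, rfl⟩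
      · exfalso
        have h := hn₀even ((ℓ:ℤ)+1) (List.mem_cons_self)
        rw [Int.even_add_one] at h
        exact h ((Int.even_coe_nat ℓ).mpr hle)
      · rfl
      · exfalso
        have h := hn₀even (m:ℤ) (by simp)
        rw [Int.even_coe_nat] at h
        exact (Nat.not_odd_iff_even.mpr h) hmo
    rw [Phi_eval ℓ m hℓ hm n₀, hn0, sval_Lc ℓ m hℓ hm]
    have e1 : |(0:ℤ) - 2*((m:ℤ) - -(ℓ:ℤ))*1| = 2*((ℓ:ℤ)+(m:ℤ)) := by
      rw [show (0:ℤ) - 2*((m:ℤ) - -(ℓ:ℤ))*1 = -(2*((ℓ:ℤ)+(m:ℤ))) by ring, abs_neg]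
      exact abs_of_nonneg (by positivity)
    have e2 : |(0:ℤ) - 2*(-(ℓ:ℤ) - -(ℓ:ℤ))*1| = 0 := by norm_num
    have e3 : |(0:ℤ) - 2*((0:ℤ) - -(ℓ:ℤ))*1| = 2*(ℓ:ℤ) := by
      rw [show (0:ℤ) - 2*((0:ℤ) - -(ℓ:ℤ))*1 = -(2*(ℓ:ℤ)) by ring, abs_neg]
      exact abs_of_nonneg (by positivity)
    rw [e1, e2, e3]
    by_cases h2 : 2 ≤ ℓ ∧ 2 ≤ m
    · rw [if_pos h2]
      push_cast
      ring
    · have hm1 : m = 1 := by omega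
      subst hm1
      rw [if_neg h2]
      push_cast
      ring
end
end

section
/- Let α > 1 be odd and β an integer with 0 < β < α and gcd(α,β) = 1. Let S be the set of all finite integer sequences [n_1, …, n_k] with |n_i| ≥ 2 for all i whose continued fraction value equals β/α or (β−α)/α. Then S is finite and Σ_{n∈S} ∏_{j=1}^{k}(|n_j| − 1) = α. Equivalently, the total Culler–Shalen seminorm of the meridian satisfies Φ(1,0) = (α−1)/2, which is the L-degree of the Â-polynomial of the two-bridge knot K(α,β). -/
noncomputable section

def T (x : ℚ) : Set (List ℤ) := {L | (∀ n ∈ L, 2 ≤ |n|) ∧ cf L = x}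

lemma abs_cf_lt_one : ∀ (L : List ℤ), (∀ n ∈ L, 2 ≤ |n|) → |cf L| < 1
  | [], _ => by simp [cf]
  | n :: L, h => by
    have hL : |cf L| < 1 := abs_cf_lt_one L (fun m hm => h m (List.mem_cons_of_mem _ hm))
    have hn : (2:ℚ) ≤ |(n:ℚ)| := by
      have h2 := h n (List.mem_cons_self)
      have : ((2:ℤ):ℚ) ≤ ((|n|:ℤ):ℚ) := by exact_mod_cast h2
      simpa using this
    have h1 : 1 < |(n:ℚ) + cf L| := by
      have h3 : |(n:ℚ)| - |cf L| ≤ |(n:ℚ) + cf L| := by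
        have := abs_add_le ((n:ℚ) + cf L) (-(cf L))
        simp at this
        linarith [this]
      linarith
    rw [cf, one_div, abs_inv]
    exact inv_lt_one_of_one_lt₀ h1

lemma denom_ne_zero {n : ℤ} {L : List ℤ} (h : ∀ m ∈ n :: L, 2 ≤ |m|) :
    (n:ℚ) + cf L ≠ 0 := by
  have hL : |cf L| < 1 := abs_cf_lt_one L (fun m hm => h m (List.mem_cons_of_mem _ hm))
  have hn : (2:ℚ) ≤ |(n:ℚ)| := by
    have h2 := h n (List.mem_cons_self)
    have : ((2:ℤ):ℚ) ≤ ((|n|:ℤ):ℚ) := by exact_mod_cast h2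
    simpa using this
  intro h0
  have : |(n:ℚ)| = |cf L| := by
    have : (n:ℚ) = -(cf L) := by linarith [h0]
    rw [this, abs_neg]
  linarith

lemma cf_ne_zero {n : ℤ} {L : List ℤ} (h : ∀ m ∈ n :: L, 2 ≤ |m|) : cf (n :: L) ≠ 0 := by
  rw [cf]
  exact one_div_ne_zero (denom_ne_zero h)

lemma T_zero : T 0 = {[]} := by
  ext L
  constructor
  · rintro ⟨hg, hcf⟩
    cases L with
    | nil => rfl
    | cons n L' => exact absurd hcf (cf_ne_zero hg)
  · rintro rfl
    exact ⟨by simp, rfl⟩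

lemma T_empty {x : ℚ} (hx : 1 ≤ |x|) : T x = ∅ := by
  ext L
  simp only [Set.mem_empty_iff_false, iff_false]
  rintro ⟨hg, hcf⟩
  have := abs_cf_lt_one L hg
  rw [hcf] at this
  linarith

lemma head_mem_cases {x : ℚ} {n : ℤ} {L : List ℤ} (h : n :: L ∈ T x) :
    (n = ⌊x⁻¹⌋ ∨ n = ⌊x⁻¹⌋ + 1) ∧ L ∈ T (x⁻¹ - n) := by
  obtain ⟨hg, hcf⟩ := h
  have hgL : ∀ m ∈ L, 2 ≤ |m| := fun m hm => hg m (List.mem_cons_of_mem _ hm)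
  have hcL : |cf L| < 1 := abs_cf_lt_one L hgL
  have hz : (n:ℚ) + cf L ≠ 0 := denom_ne_zero hg
  have hxinv : x⁻¹ = (n:ℚ) + cf L := by
    rw [cf, one_div] at hcf
    rw [← hcf, inv_inv]
  have hcfL : cf L = x⁻¹ - n := by rw [hxinv]; ring
  have habs : |x⁻¹ - (n:ℚ)| < 1 := by rw [← hcfL]; exact hcL
  constructor
  · have h1 : (n:ℚ) - 1 < x⁻¹ := by
      have := abs_lt.mp habs
      linarith [this.2]
    have h2 : x⁻¹ < (n:ℚ) + 1 := by
      have := abs_lt.mp habs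
      linarith [this.1]
    have hA : n - 1 ≤ ⌊x⁻¹⌋ := by
      rw [Int.le_floor]
      push_cast
      linarith
    have hB : ⌊x⁻¹⌋ ≤ n := by
      have := Int.floor_le x⁻¹
      have h3 : (⌊x⁻¹⌋ : ℚ) < (n:ℚ) + 1 := lt_of_le_of_lt this h2
      exact_mod_cast Int.lt_add_one_iff.mp (by exact_mod_cast h3)
    omega
  · exact ⟨hgL, hcfL⟩

lemma cons_mem_T {x : ℚ} {n : ℤ} (hn : 2 ≤ |n|) {L : List ℤ} (h : L ∈ T (x⁻¹ - n)) :
    n :: L ∈ T x := by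
  obtain ⟨hg, hcf⟩ := h
  refine ⟨?_, ?_⟩
  · intro m hm
    rcases List.mem_cons.mp hm with rfl | hm'
    · exact hn
    · exact hg m hm'
  · rw [cf, hcf]
    have : (n:ℚ) + (x⁻¹ - n) = x⁻¹ := by ring
    rw [this, one_div, inv_inv]

lemma T_subset (x : ℚ) (hx : x ≠ 0) :
    T x ⊆ (List.cons ⌊x⁻¹⌋) '' T (x⁻¹ - ⌊x⁻¹⌋) ∪
      (List.cons (⌊x⁻¹⌋ + 1)) '' T (x⁻¹ - (⌊x⁻¹⌋ + 1)) := by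
  intro L hL
  cases L with
  | nil =>
    exfalso
    exact hx (by rw [← hL.2]; rfl)
  | cons n L' =>
    obtain ⟨hcase, hmem⟩ := head_mem_cases hL
    rcases hcase with rfl | rfl
    · exact Or.inl ⟨L', hmem, rfl⟩
    · right
      refine ⟨L', ?_, rfl⟩
      convert hmem using 2
      push_cast
      ring

lemma T_finite_frac : ∀ (d : ℕ) (a b : ℤ), b.natAbs ≤ d → (T ((a:ℚ)/b)).Finite := by
  intro d
  induction d with
  | zero =>
    intro a b hb
    have hb0 : b = 0 := by omega
    subst hb0
    simp only [Int.cast_zero, div_zero, T_zero]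
    exact Set.finite_singleton _
  | succ d IH =>
    intro a b hbd
    set x := (a:ℚ)/b with hxdef
    by_cases hx0 : x = 0
    · rw [hx0, T_zero]; exact Set.finite_singleton _
    by_cases hx1 : 1 ≤ |x|
    · rw [T_empty hx1]; exact Set.finite_empty
    push_neg at hx1
    have ha0 : a ≠ 0 := by rintro rfl; simp [hxdef] at hx0
    have hb0 : b ≠ 0 := by rintro rfl; simp [hxdef] at hx0
    have hab : a.natAbs < b.natAbs := by
      have h1 : |(a:ℚ)| < |(b:ℚ)| := by
        have hbq : (0:ℚ) < |(b:ℚ)| := by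
          simpa using abs_pos.mpr (show ((b:ℚ)) ≠ 0 by exact_mod_cast hb0)
        have : |x| = |(a:ℚ)| / |(b:ℚ)| := by rw [hxdef, abs_div]
        rw [this, div_lt_one hbq] at hx1
        exact hx1
      have h2 : |a| < |b| := by
        have : ((|a|:ℤ):ℚ) < ((|b|:ℤ):ℚ) := by push_cast [Int.cast_abs]; exact h1
        exact_mod_cast this
      rw [Int.abs_eq_natAbs, Int.abs_eq_natAbs] at h2
      omega
    have hinv : x⁻¹ = (b:ℚ)/a := by rw [hxdef, inv_div]
    have hsub : ∀ n : ℤ, x⁻¹ - (n:ℚ) = ((b - n*a : ℤ):ℚ)/a := by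
      intro n
      rw [hinv]
      have haq : (a:ℚ) ≠ 0 := by exact_mod_cast ha0
      field_simp
      push_cast
      ring
    apply Set.Finite.subset _ (T_subset x hx0)
    apply Set.Finite.union
    · apply Set.Finite.image
      rw [show ((⌊x⁻¹⌋:ℤ):ℚ) = ((⌊x⁻¹⌋:ℤ):ℚ) from rfl, hsub ⌊x⁻¹⌋]
      exact IH _ a (by omega)
    · apply Set.Finite.image
      have : x⁻¹ - ((⌊x⁻¹⌋:ℤ):ℚ) - 1 = x⁻¹ - ((⌊x⁻¹⌋ + 1 : ℤ):ℚ) := by push_cast; ring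
      rw [show x⁻¹ - (((⌊x⁻¹⌋:ℤ):ℚ) + 1) = x⁻¹ - ((⌊x⁻¹⌋ + 1 : ℤ):ℚ) by push_cast; ring, hsub (⌊x⁻¹⌋ + 1)]
      exact IH _ a (by omega)

lemma T_finite (x : ℚ) : (T x).Finite := by
  have := T_finite_frac x.den x.num (x.den : ℤ) le_rfl
  have he : ((x.den : ℤ):ℚ) = (x.den : ℚ) := by push_cast; rfl
  rw [he, Rat.num_div_den] at this
  exact this

def W (x : ℚ) : ℤ := ∑ᶠ L ∈ T x, weightProd L

lemma W_zero : W 0 = 1 := by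
  rw [W, T_zero, finsum_mem_singleton]
  rfl

lemma W_abs_ge {x : ℚ} (hx : 1 ≤ |x|) : W x = 0 := by
  rw [W, T_empty hx, finsum_mem_empty]

lemma cf_neg : ∀ (L : List ℤ), cf (L.map (fun n => -n)) = - cf L
  | [] => by simp [cf]
  | n :: L => by
    simp only [List.map_cons, cf, cf_neg L]
    push_cast
    rw [show (-(n:ℚ) + -cf L) = -((n:ℚ) + cf L) by ring, one_div, one_div, inv_neg]

lemma W_neg (x : ℚ) : W (-x) = W x := by
  have himg : T (-x) = (fun L => L.map (fun n => -n)) '' T x := by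
    ext L
    constructor
    · rintro ⟨hg, hcf⟩
      refine ⟨L.map (fun n => -n), ⟨?_, ?_⟩, ?_⟩
      · intro m hm
        simp only [List.mem_map] at hm
        obtain ⟨m', hm', rfl⟩ := hm
        rw [abs_neg]; exact hg m' hm'
      · rw [cf_neg, hcf, neg_neg]
      · simp [List.map_map, Function.comp]
    · rintro ⟨M, ⟨hg, hcf⟩, rfl⟩
      refine ⟨?_, ?_⟩
      · intro m hm
        simp only [List.mem_map] at hm
        obtain ⟨m', hm', rfl⟩ := hm
        rw [abs_neg]; exact hg m' hm'
      · rw [cf_neg, hcf]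
  have hinj : Set.InjOn (fun L : List ℤ => L.map (fun n => -n)) (T x) := by
    intro L1 _ L2 _ h
    have := congrArg (List.map (fun n : ℤ => -n)) h
    simpa [List.map_map, Function.comp] using this
  rw [W, himg, finsum_mem_image hinj]
  apply finsum_mem_congr rfl
  intro L _
  simp [weightProd, List.map_map, Function.comp_def, abs_neg]

lemma W_rec (x : ℚ) (hx0 : x ≠ 0) (hx1 : |x| < 1) :
    W x = (|⌊x⁻¹⌋| - 1) * W (x⁻¹ - ⌊x⁻¹⌋) +
      (|⌊x⁻¹⌋ + 1| - 1) * W (x⁻¹ - ⌊x⁻¹⌋ - 1) := by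
  set q := ⌊x⁻¹⌋ with hq
  have hqcases : 1 ≤ q ∨ q ≤ -2 := by
    have hx0' : (0:ℚ) < |x| := abs_pos.mpr hx0
    have h1 : 1 < |x⁻¹| := by
      rw [abs_inv]
      exact (one_lt_inv_iff₀).mpr ⟨hx0', hx1⟩
    rcases lt_abs.mp h1 with h | h
    · left
      rw [hq, Int.le_floor]
      exact_mod_cast h.le
    · right
      have h2 : x⁻¹ < -1 := by linarith
      have := (Int.floor_le x⁻¹)
      have h3 : (q:ℚ) < -1 := lt_of_le_of_lt this h2
      have : q < -1 := by exact_mod_cast h3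
      omega
  -- branch sum lemma
  have branch : ∀ n : ℤ, (2 ≤ |n| ∨ |n| = 1) → ∀ y : ℚ,
      (∑ᶠ L ∈ (if 2 ≤ |n| then List.cons n '' T y else (∅ : Set (List ℤ))), weightProd L)
        = (|n| - 1) * W y := by
    intro n hn y
    by_cases h2 : 2 ≤ |n|
    · rw [if_pos h2]
      have hinj : Set.InjOn (List.cons n) (T y) := by
        intro L1 _ L2 _ h
        exact (List.cons.injEq ..).mp h |>.2
      rw [finsum_mem_image hinj]
      have hcong : ∀ L ∈ T y, weightProd (n :: L) = (|n| - 1) * weightProd L := by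
        intro L _
        simp [weightProd]
      rw [finsum_mem_congr rfl hcong]
      have hf := T_finite y
      rw [finsum_mem_eq_finite_toFinset_sum _ hf, W, finsum_mem_eq_finite_toFinset_sum _ hf,
        Finset.mul_sum]
    · rw [if_neg h2, finsum_mem_empty]
      have : |n| = 1 := hn.resolve_left h2
      rw [this]
      ring
  have hTeq : T x = (if 2 ≤ |q| then List.cons q '' T (x⁻¹ - q) else ∅) ∪
      (if 2 ≤ |q + 1| then List.cons (q+1) '' T (x⁻¹ - ((q:ℚ) + 1)) else ∅) := by
    ext L
    constructor
    · intro hL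
      cases L with
      | nil => exact absurd (by rw [← hL.2]; rfl) hx0
      | cons n L' =>
        have hn2 : 2 ≤ |n| := hL.1 n (List.mem_cons_self)
        obtain ⟨hcase, hmem⟩ := head_mem_cases hL
        rcases hcase with rfl | rfl
        · left; rw [if_pos hn2]; exact ⟨L', hmem, rfl⟩
        · right
          rw [if_pos hn2]
          refine ⟨L', ?_, rfl⟩
          convert hmem using 2
          push_cast
          ring
    · intro hL
      rcases hL with hL | hL
      · split_ifs at hL with h2
        · obtain ⟨L', hL', rfl⟩ := hL
          exact cons_mem_T h2 hL'
        · exact absurd hL (Set.notMem_empty _)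
      · split_ifs at hL with h2
        · obtain ⟨L', hL', rfl⟩ := hL
          apply cons_mem_T h2
          convert hL' using 2
          push_cast
          ring
        · exact absurd hL (Set.notMem_empty _)
  have hdisj : Disjoint (if 2 ≤ |q| then List.cons q '' T (x⁻¹ - q) else ∅)
      (if 2 ≤ |q + 1| then List.cons (q+1) '' T (x⁻¹ - ((q:ℚ) + 1)) else ∅) := by
    rw [Set.disjoint_left]
    intro L hL1 hL2
    have h1 : ∃ M, q :: M = L := by
      split_ifs at hL1
      · obtain ⟨M, _, hM⟩ := hL1; exact ⟨M, hM⟩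
      · exact absurd hL1 (Set.notMem_empty _)
    have h2 : ∃ M, (q+1) :: M = L := by
      split_ifs at hL2
      · obtain ⟨M, _, hM⟩ := hL2; exact ⟨M, hM⟩
      · exact absurd hL2 (Set.notMem_empty _)
    obtain ⟨M1, hM1⟩ := h1
    obtain ⟨M2, hM2⟩ := h2
    rw [← hM1] at hM2
    have := ((List.cons.injEq ..).mp hM2).1
    omega
  have hfin1 : (if 2 ≤ |q| then List.cons q '' T (x⁻¹ - q) else (∅: Set (List ℤ))).Finite := by
    split_ifs
    · exact (T_finite _).image _
    · exact Set.finite_empty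
  have hfin2 : (if 2 ≤ |q+1| then List.cons (q+1) '' T (x⁻¹ - ((q:ℚ)+1)) else (∅: Set (List ℤ))).Finite := by
    split_ifs
    · exact (T_finite _).image _
    · exact Set.finite_empty
  have hq1 : 2 ≤ |q| ∨ |q| = 1 := by
    rw [Int.abs_eq_natAbs]; omega
  have hq2 : 2 ≤ |q + 1| ∨ |q + 1| = 1 := by
    rw [Int.abs_eq_natAbs]; omega
  rw [W, hTeq, finsum_mem_union hdisj hfin1 hfin2, branch q hq1 _, branch (q+1) hq2 _]
  have : x⁻¹ - ((q:ℚ) + 1) = x⁻¹ - q - 1 := by ring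
  rw [this]

lemma floor_int_div (a b : ℤ) (hb : 0 < b) : ⌊(a:ℚ)/(b:ℚ)⌋ = a / b := by
  lift b to ℕ using hb.le
  exact_mod_cast Rat.floor_intCast_div_natCast a b

lemma W_div (a b : ℤ) (h0 : 0 < b) (hba : b < a) :
    W ((b:ℚ)/(a:ℚ)) = (a / b - 1) * W (((a % b : ℤ) : ℚ)/(b:ℚ))
      + (a / b) * W (((a % b - b : ℤ) : ℚ)/(b:ℚ)) := by
  have ha0 : (0:ℚ) < (a:ℚ) := by exact_mod_cast h0.trans hba
  have hb0 : (0:ℚ) < (b:ℚ) := by exact_mod_cast h0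
  set x : ℚ := (b:ℚ)/(a:ℚ) with hxdef
  have hx0 : x ≠ 0 := by positivity
  have hx1 : |x| < 1 := by
    rw [hxdef, abs_of_pos (by positivity)]
    rw [div_lt_one ha0]
    exact_mod_cast hba
  have hinv : x⁻¹ = (a:ℚ)/(b:ℚ) := by rw [hxdef, inv_div]
  have hfl : ⌊x⁻¹⌋ = a / b := by rw [hinv]; exact floor_int_div a b h0
  have hqpos : 1 ≤ a / b := by
    rw [Int.le_ediv_iff_mul_le h0]
    linarith
  have hmod : (a:ℚ) = (b:ℚ) * ((a/b : ℤ):ℚ) + ((a % b : ℤ):ℚ) := by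
    exact_mod_cast congrArg (fun z : ℤ => (z:ℚ)) (Int.mul_ediv_add_emod a b).symm
  have h1 : x⁻¹ - ((a/b : ℤ):ℚ) = ((a % b : ℤ):ℚ)/(b:ℚ) := by
    rw [hinv]
    field_simp
    linarith [hmod]
  have h2 : ((a % b : ℤ):ℚ)/(b:ℚ) - 1 = ((a % b - b : ℤ):ℚ)/(b:ℚ) := by
    push_cast
    field_simp
  have := W_rec x hx0 hx1
  rw [hfl, h1, h2] at this
  rw [this, abs_of_pos (by omega : (0:ℤ) < a/b), abs_of_pos (by omega : (0:ℤ) < a/b + 1)]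
  ring

lemma W_step (m c : ℤ) (hc : 0 < c) (hm : 2*c < m) :
    W (((m - c : ℤ):ℚ)/(m:ℚ)) = W (((m - 2*c : ℤ):ℚ)/((m - c : ℤ):ℚ)) := by
  have h1 : 0 < m - c := by omega
  have h2 : m - c < m := by omega
  have hdiv : m / (m - c) = 1 := by
    have hA : 1 ≤ m / (m - c) := by
      rw [Int.le_ediv_iff_mul_le h1]; omega
    have hB : m / (m - c) < 2 := by
      rw [Int.ediv_lt_iff_lt_mul h1]; omega
    omega
  have hmod : m % (m - c) = c := by
    rw [Int.emod_def, hdiv]; ring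
  have := W_div m (m - c) h1 h2
  rw [hdiv, hmod] at this
  rw [this]
  have hneg : ((c - (m - c) : ℤ):ℚ)/((m - c : ℤ):ℚ) = -(((m - 2*c : ℤ):ℚ)/((m - c : ℤ):ℚ)) := by
    push_cast
    rw [← neg_div]
    ring_nf
  rw [hneg, W_neg]
  ring

lemma W_int_one (a : ℤ) (ha : 2 ≤ a) : W ((1:ℚ)/(a:ℚ)) = a - 1 := by
  have h := W_div a 1 one_pos (by omega)
  norm_num at h
  rw [one_div]
  rw [h, W_zero]
  have h1 : W (-1 : ℚ) = 0 := W_abs_ge (by norm_num)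
  rw [h1]
  ring

lemma W_pred : ∀ a : ℤ, 2 ≤ a → W (((a - 1 : ℤ):ℚ)/(a:ℚ)) = 1 := by
  refine Int.le_induction ?_ ?_
  · have h := W_int_one 2 (by norm_num)
    norm_num at h ⊢
    convert h using 2
  · intro a ha IH
    have hstep := W_step (a + 1) 1 one_pos (by omega)
    have h1 : (a + 1 - 1 : ℤ) = a := by ring
    have h2 : (a + 1 - 2*1 : ℤ) = a - 1 := by ring
    rw [h1, h2] at hstep
    rw [h1]
    rw [hstep]
    exact IH

lemma W_chain : ∀ (k : ℕ) (b r : ℤ), 0 < b → 0 < r →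
    W ((((k:ℤ)*b + r : ℤ):ℚ)/((((k:ℤ)+1)*b + r : ℤ):ℚ)) = W ((r:ℚ)/((b + r : ℤ):ℚ)) := by
  intro k
  induction k with
  | zero =>
    intro b r hb hr
    norm_num
  | succ k IH =>
    intro b r hb hr
    have hkb : (0:ℤ) ≤ (k:ℤ)*b := mul_nonneg (by positivity) hb.le
    have hstep := W_step (((k:ℤ)+1+1)*b + r) b hb (by nlinarith)
    have h1 : (((k:ℤ)+1+1)*b + r - b : ℤ) = ((k:ℤ)+1)*b + r := by ring
    have h2 : (((k:ℤ)+1+1)*b + r - 2*b : ℤ) = (k:ℤ)*b + r := by ring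
    rw [h1, h2] at hstep
    rw [show (((k+1:ℕ):ℤ)*b + r : ℤ) = ((k:ℤ)+1)*b + r by push_cast; ring,
      show ((((k+1:ℕ):ℤ)+1)*b + r : ℤ) = ((k:ℤ)+1+1)*b + r by push_cast; ring]
    rw [hstep]
    exact IH b r hb hr

lemma cop_mod {a b : ℤ} (h : IsCoprime a b) : IsCoprime b (a % b) := by
  have h3 := h.symm.add_mul_left_right (-(a/b))
  have : a + b * (-(a/b)) = a % b := by rw [Int.emod_def]; ring
  rwa [this] at h3

lemma mod_pos {a b : ℤ} (hb : 2 ≤ b) (h : IsCoprime a b) : 0 < a % b := by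
  have h0 : 0 ≤ a % b := Int.emod_nonneg a (by omega)
  rcases h0.eq_or_lt with heq | hlt
  · exfalso
    have hdvd : b ∣ a := Int.dvd_of_emod_eq_zero heq.symm
    have := h.isUnit_of_dvd' hdvd dvd_rfl
    rw [Int.isUnit_iff] at this
    omega
  · exact hlt

lemma main_core (a b : ℤ) (hb0 : 0 < b) (h2b : 2*b < a) (hcop : IsCoprime a b)
    (IH : ∀ a', 2 ≤ a' → a' < a → ∀ b', 0 < b' → b' < a' → IsCoprime a' b' →
      W ((b':ℚ)/(a':ℚ)) + W (((a' - b' : ℤ):ℚ)/(a':ℚ)) = a') :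
    W ((b:ℚ)/(a:ℚ)) + W (((a - b : ℤ):ℚ)/(a:ℚ)) = a := by
  have hba : b < a := by omega
  rcases (show 1 ≤ b from hb0).eq_or_lt with hb1 | hb2
  · -- b = 1
    have hb1' : b = 1 := hb1.symm
    subst hb1'
    have t1 : W ((1:ℚ)/(a:ℚ)) = a - 1 := W_int_one a (by omega)
    have t2 : W (((a - 1 : ℤ):ℚ)/(a:ℚ)) = 1 := W_pred a (by omega)
    rw [show ((1:ℤ):ℚ) = (1:ℚ) by norm_num, t1, t2]
    ring
  · -- 2 ≤ b
    set q := a / b with hqdef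
    set r := a % b with hrdef
    have hr0 : 0 < r := mod_pos hb2 hcop
    have hrb : r < b := Int.emod_lt_of_pos a hb0
    have hq2 : 2 ≤ q := by rw [hqdef, Int.le_ediv_iff_mul_le hb0]; omega
    have hbr : IsCoprime b r := cop_mod hcop
    have haq : a = b * q + r := by rw [hqdef, hrdef]; exact (Int.mul_ediv_add_emod a b).symm
    -- W(b/a)
    have e1 := W_div a b hb0 hba
    rw [← hqdef, ← hrdef] at e1
    have e2 : W (((r - b : ℤ):ℚ)/(b:ℚ)) = W (((b - r : ℤ):ℚ)/(b:ℚ)) := by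
      rw [show ((r - b : ℤ):ℚ) = -((b - r : ℤ):ℚ) by push_cast; ring, neg_div, W_neg]
    rw [e2] at e1
    -- W((a-b)/a)
    have e3 := W_step a b hb0 h2b
    have h5 : (a - 2*b : ℤ) = (q-2)*b + r := by linear_combination haq
    have h6 : (a - b : ℤ) = ((q-2)+1)*b + r := by linear_combination haq
    have kZ : (((q-2).toNat : ℕ):ℤ) = q - 2 := Int.toNat_of_nonneg (by omega)
    have e4 := W_chain (q-2).toNat b r hb0 hr0
    rw [kZ, ← h5, ← h6] at e4
    rw [e4] at e3
    -- e5 : W(r/(b+r)) = W(r/b) + r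
    have e5 : W ((r:ℚ)/((b + r : ℤ):ℚ)) = W ((r:ℚ)/(b:ℚ)) + r := by
      rcases (show 1 ≤ r from hr0).eq_or_lt with hr1 | hr2
      · rw [← hr1]
        have u1 : W ((1:ℚ)/((b + 1 : ℤ):ℚ)) = b := by
          have := W_int_one (b+1) (by omega)
          rw [show ((b+1:ℤ):ℚ) = ((b:ℚ)+1) by push_cast; ring] at this ⊢
          rw [this]; ring
        have u2 : W ((1:ℚ)/(b:ℚ)) = b - 1 := W_int_one b hb2
        rw [show ((1:ℤ):ℚ) = (1:ℚ) by norm_num, u1, u2]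
        ring
      · set s := b / r with hsdef
        set t := b % r with htdef
        have ht0 : 0 < t := mod_pos hr2 hbr
        have htr : t < r := Int.emod_lt_of_pos b hr0
        have hrt : IsCoprime r t := cop_mod hbr
        have f1 := W_div (b+r) r hr0 (by omega)
        have hdiv' : (b + r) / r = s + 1 := by
          rw [hsdef, show b + r = b + 1 * r by ring, Int.add_mul_ediv_right b 1 (by omega : r ≠ 0)]
        have hmod' : (b + r) % r = t := by
          rw [htdef, show b + r = b + 1 * r by ring, Int.add_mul_emod_self_right]
        rw [hdiv', hmod'] at f1
        have f2 := W_div b r hr0 hrb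
        rw [← hsdef, ← htdef] at f2
        have f3 : W (((t - r : ℤ):ℚ)/(r:ℚ)) = W (((r - t : ℤ):ℚ)/(r:ℚ)) := by
          rw [show ((t - r : ℤ):ℚ) = -((r - t : ℤ):ℚ) by push_cast; ring, neg_div, W_neg]
        rw [f3] at f1 f2
        have f4 := IH r hr2 (by omega) t ht0 htr hrt
        linear_combination f1 - f2 + f4
    rw [e5] at e3
    have e6 := IH b hb2 hba r hr0 hrb hbr
    linear_combination e1 + e3 + q * e6 - haq

lemma W_pair_aux : ∀ (N : ℕ) (a : ℤ), a.toNat ≤ N → 2 ≤ a → ∀ b : ℤ, 0 < b → b < a →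
    IsCoprime a b → W ((b:ℚ)/(a:ℚ)) + W (((a - b : ℤ):ℚ)/(a:ℚ)) = a := by
  intro N
  induction N with
  | zero => intro a ha h2; omega
  | succ N IH =>
    intro a haN ha2 b hb0 hba hcop
    have IH' : ∀ a', 2 ≤ a' → a' < a → ∀ b', 0 < b' → b' < a' → IsCoprime a' b' →
        W ((b':ℚ)/(a':ℚ)) + W (((a' - b' : ℤ):ℚ)/(a':ℚ)) = a' :=
      fun a' h2' hlt => IH a' (by omega) h2'
    rcases lt_trichotomy (2*b) a with h | h | h
    · exact main_core a b hb0 h hcop IH'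
    · -- a = 2b, forces b = 1, a = 2
      have hdvd : b ∣ a := ⟨2, by omega⟩
      have hu := hcop.symm.isUnit_of_dvd' dvd_rfl hdvd
      rw [Int.isUnit_iff] at hu
      have hb1 : b = 1 := by rcases hu with h1 | h1 <;> omega
      have ha2' : a = 2 := by omega
      subst hb1 ha2'
      have h12 := W_int_one 2 (by norm_num)
      norm_num at h12 ⊢
      linarith
    · have hcop' : IsCoprime a (a - b) := by
        have h1 := hcop.add_mul_left_right (-1)
        have : b + a * (-1) = -(a - b) := by ring
        rw [this] at h1
        have h2' := h1.neg_right
        rwa [neg_neg] at h2'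
      have hres := main_core a (a - b) (by omega) (by omega) hcop' IH'
      rw [show (a - (a - b) : ℤ) = b from by ring] at hres
      linarith
lemma W_pair (a b : ℤ) (ha : 2 ≤ a) (hb0 : 0 < b) (hba : b < a) (hcop : IsCoprime a b) :
    W ((b:ℚ)/(a:ℚ)) + W (((a - b : ℤ):ℚ)/(a:ℚ)) = a :=
  W_pair_aux a.toNat a le_rfl ha b hb0 hba hcop

/-- For `α > 1` odd and `0 < β < α` with `gcd(α,β) = 1`: the set `S` is finite,
`Σ_{n∈S} ∏_j (|n_j| − 1) = α`, and the total Culler–Shalen seminorm of the meridian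
satisfies `Φ(1,0) = (α−1)/2` (the `L`-degree of the `Â`-polynomial of `K(α,β)`). -/
theorem Ldegree_two_bridge (α β : ℤ) (hα1 : 1 < α) (hαodd : Odd α)
    (hβ0 : 0 < β) (hβα : β < α) (hcop : IsCoprime α β) :
    (Sset α β).Finite ∧
    (∑ᶠ L ∈ Sset α β, weightProd L) = α ∧
    (∀ n₀ ∈ Sset α β, (∀ n ∈ n₀, Even n) →
      totalSeminorm α β n₀ 1 0 = ((α : ℚ) - 1) / 2) := by
  have hα0 : (α:ℚ) ≠ 0 := by
    have : (0:ℤ) < α := by omega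
    exact_mod_cast this.ne'
  have hv2 : ((β:ℚ) - (α:ℚ)) / (α:ℚ) = -(((α - β : ℤ):ℚ)/(α:ℚ)) := by
    rw [← neg_div]
    push_cast
    ring_nf
  have hSeq : Sset α β = T ((β:ℚ)/(α:ℚ)) ∪ T (((β:ℚ) - (α:ℚ))/(α:ℚ)) := by
    ext L
    simp only [Sset, T, Set.mem_setOf_eq, Set.mem_union]
    tauto
  have hne : ((β:ℚ)/(α:ℚ)) ≠ ((β:ℚ) - (α:ℚ))/(α:ℚ) := by
    intro h
    rw [div_eq_div_iff hα0 hα0] at h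
    have : (α:ℚ) = 0 := by nlinarith [h]
    exact hα0 this
  have hdisj : Disjoint (T ((β:ℚ)/(α:ℚ))) (T (((β:ℚ) - (α:ℚ))/(α:ℚ))) := by
    rw [Set.disjoint_left]
    rintro L ⟨_, h1⟩ ⟨_, h2⟩
    exact hne (h1 ▸ h2 ▸ rfl)
  have hfin : (Sset α β).Finite := by
    rw [hSeq]
    exact (T_finite _).union (T_finite _)
  have hsum : (∑ᶠ L ∈ Sset α β, weightProd L) = α := by
    have h1 : (∑ᶠ L ∈ Sset α β, weightProd L) =
        W ((β:ℚ)/(α:ℚ)) + W (((β:ℚ) - (α:ℚ))/(α:ℚ)) := by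
      rw [hSeq, finsum_mem_union hdisj (T_finite _) (T_finite _)]
      rfl
    rw [h1, hv2, W_neg]
    exact W_pair α β hα1 hβ0 hβα hcop
  refine ⟨hfin, hsum, ?_⟩
  intro n₀ _ _
  rw [totalSeminorm]
  have hcong : ∑ᶠ L ∈ Sset α β, ((|(1:ℤ) - 2 * (sval L - sval n₀) * 0| * weightProd L : ℤ):ℚ)
      = ∑ᶠ L ∈ Sset α β, ((weightProd L : ℤ):ℚ) := by
    apply finsum_mem_congr rfl
    intro L _
    norm_num
  rw [hcong]
  have hcast : ∑ᶠ L ∈ Sset α β, ((weightProd L : ℤ):ℚ)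
      = (((∑ᶠ L ∈ Sset α β, weightProd L : ℤ)):ℚ) := by
    rw [finsum_mem_eq_finite_toFinset_sum _ hfin, finsum_mem_eq_finite_toFinset_sum _ hfin]
    push_cast
    rfl
  rw [hcast, hsum]
  norm_num
  ring
end
end
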